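/- Let U ⊆ ℂ be open and ξ₀, η₀, ξ₁, η₁ : U → ℂ be real-differentiable, r₀ : U → ℝ real-differentiable with ∂̄r₀ = 2(η₀·∂̄ξ̄₀ + η̄₀·∂̄ξ₀)/(1 + ξ₀ξ̄₀)² on U. Assume (1 − ξ₀ξ̄₀)ξ̄₁ − 2ξ̄₀ ≠ 0 on U, and define pointwise ξ₂ = (2ξ₀ξ̄₁ + 1 − ξ₀ξ̄₀)/((1 − ξ₀ξ̄₀)ξ̄₁ − 2ξ̄₀), η₁ = ((1 + ξ̄₀ξ₁)²η₀ − (ξ₀ − ξ₁)²η̄₀ + (ξ₀ − ξ₁)(1 + ξ̄₀ξ₁)(1 + ξ₀ξ̄₀)r₀)/(1 + ξ₀ξ̄₀)² (assumed to coincide with the given η₁), and η₂ = ((ξ̄₀ − ξ̄₁)²η₀ − (1 + ξ₀ξ̄₁)²η̄₀ + (ξ̄₀ − ξ̄₁)(1 + ξ₀ξ̄₁)(1 + ξ₀ξ̄₀)r₀)/((1 − ξ₀ξ̄₀)ξ̄₁ − 2ξ̄₀)². Then on U: (η₂·∂̄ξ̄₂ + η̄₂·∂̄ξ₂)/(1 +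 ξ₂ξ̄₂)² = (η₁·∂̄ξ̄₁ + η̄₁·∂̄ξ₁)/(1 + ξ₁ξ̄₁)² + ∂̄( ((|ξ₀ − ξ₁|² − |1 + ξ₀ξ̄₁|²)/((1 + ξ₀ξ̄₀)(1 + ξ₁ξ̄₁)))·r₀ ). -/

import Mathlib

open ComplexConjugate

/-- The conjugate Wirtinger derivative `∂̄f` of a real-differentiable `f : ℂ → ℂ`. -/
noncomputable def wirtDbar (f : ℂ → ℂ) (ν : ℂ) : ℂ :=
  (1 / 2) * (fderiv ℝ f ν 1 + Complex.I * fderiv ℝ f ν Complex.I)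

lemma wirtDbar_congr {f g : ℂ → ℂ} {ν : ℂ} (h : f =ᶠ[nhds ν] g) :
    wirtDbar f ν = wirtDbar g ν := by
  unfold wirtDbar; rw [h.fderiv_eq]

lemma wirtDbar_const (c : ℂ) (ν : ℂ) : wirtDbar (fun _ => c) ν = 0 := by
  unfold wirtDbar; simp

lemma wirtDbar_add {f g : ℂ → ℂ} {ν : ℂ} (hf : DifferentiableAt ℝ f ν)
    (hg : DifferentiableAt ℝ g ν) :
    wirtDbar (fun w => f w + g w) ν = wirtDbar f ν + wirtDbar g ν := by
  unfold wirtDbar; rw [fderiv_fun_add hf hg]; simp; ring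

lemma wirtDbar_sub {f g : ℂ → ℂ} {ν : ℂ} (hf : DifferentiableAt ℝ f ν)
    (hg : DifferentiableAt ℝ g ν) :
    wirtDbar (fun w => f w - g w) ν = wirtDbar f ν - wirtDbar g ν := by
  unfold wirtDbar; rw [fderiv_fun_sub hf hg]; simp; ring

lemma wirtDbar_mul {f g : ℂ → ℂ} {ν : ℂ} (hf : DifferentiableAt ℝ f ν)
    (hg : DifferentiableAt ℝ g ν) :
    wirtDbar (fun w => f w * g w) ν = wirtDbar f ν * g ν + f ν * wirtDbar g ν := by
  unfold wirtDbar; rw [fderiv_fun_mul hf hg]; simp; ring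

lemma wirtDbar_inv {g : ℂ → ℂ} {ν : ℂ} (hg : DifferentiableAt ℝ g ν) (h0 : g ν ≠ 0) :
    wirtDbar (fun w => (g w)⁻¹) ν = -wirtDbar g ν / g ν ^ 2 := by
  have h := ((hasFDerivAt_inv' (𝕜 := ℝ) h0).comp ν hg.hasFDerivAt).fderiv
  unfold wirtDbar
  rw [show (fun w => (g w)⁻¹) = Inv.inv ∘ g from rfl, h]
  simp [ContinuousLinearMap.mulLeftRight_apply]
  field_simp
  ring

lemma wirtDbar_div {f g : ℂ → ℂ} {ν : ℂ} (hf : DifferentiableAt ℝ f ν)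
    (hg : DifferentiableAt ℝ g ν) (h0 : g ν ≠ 0) :
    wirtDbar (fun w => f w / g w) ν =
      (wirtDbar f ν * g ν - f ν * wirtDbar g ν) / g ν ^ 2 := by
  have : (fun w => f w / g w) = fun w => f w * (g w)⁻¹ := by
    funext w; rw [div_eq_mul_inv]
  rw [this, wirtDbar_mul (g := fun w => (g w)⁻¹) hf (hg.inv h0), wirtDbar_inv hg h0]
  field_simp
  ring

lemma diff_conj (f : ℂ → ℂ) (ν : ℂ) (hf : DifferentiableAt ℝ f ν) :
    DifferentiableAt ℝ (fun w => conj (f w)) ν :=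
  Complex.conjCLE.differentiable.differentiableAt.comp ν hf

lemma diff_ofReal (r : ℂ → ℝ) (ν : ℂ) (hr : DifferentiableAt ℝ r ν) :
    DifferentiableAt ℝ (fun w => ((r w : ℝ) : ℂ)) ν :=
  Complex.ofRealCLM.differentiable.differentiableAt.comp ν hr

lemma one_add_mul_conj_ne (z : ℂ) : (1 : ℂ) + z * conj z ≠ 0 := by
  rw [Complex.mul_conj]
  intro h
  have h2 := congrArg Complex.re h
  simp at h2
  nlinarith [Complex.normSq_nonneg z]

set_option maxHeartbeats 1000000 in
lemma poly_key (a ab b bb p pb r A Ab B Bb : ℂ) :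
    (((ab - bb) ^ 2 * p - (1 + a * bb) ^ 2 * pb + (ab - bb) * (1 + a * bb) * (1 + a * ab) * r) * ((2 * (Ab * b + ab * B) - (Ab * a + ab * A)) * ((1 - ab * a) * b - 2 * a) - (2 * ab * b + 1 - ab * a) * (-(Ab * a + ab * A) * b + (1 - ab * a) * B - 2 * A)) + ((a - b) ^ 2 * pb - (1 + ab * b) ^ 2 * p + (a - b) * (1 + ab * b) * (1 + a * ab) * r) * ((2 * (A * bb + a * Bb) - (A * ab + a * Ab)) * ((1 - a * ab) * bb - 2 * ab) - (2 * a * bb + 1 - a * ab) * (-(A * ab + a * Ab) * bb + (1 - a * ab) * Bb - 2 * Ab))) = ((((1 + ab * b) ^ 2 * p - (a - b) ^ 2 * pb + (a - b) * (1 + ab * b) * (1 + a * ab) * r) * Bb + ((1 + a * bb) ^ 2 * pb - (ab - bb) ^ 2 * p + (ab - bb) * (1 + a * bb) * (1 + a * ab) * r) * B) * (1 + a * ab) ^ 2 + (((A - B) * (ab - bb) + (a - b) * (Ab - Bb) - (A * bb + a * Bb) * (1 + ab * b) - (1 + a * bb) * (Ab * b + ab * B)) * ((1 + a * ab) * (1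 + b * bb)) - ((a - b) * (ab - bb) - (1 + a * bb) * (1 + ab * b)) * ((A * ab + a * Ab) * (1 + b * bb) + (1 + a * ab) * (B * bb + b * Bb))) * r * (1 + a * ab) ^ 2 + ((a - b) * (ab - bb) - (1 + a * bb) * (1 + ab * b)) * (2 * (p * Ab + pb * A)) * (1 + a * ab) * (1 + b * bb)) := by
  ring

lemma comb (x y u v d e s : ℂ) (hd : d ≠ 0) (he : e ≠ 0) (hs : s ≠ 0) :
    (x / d ^ 2 * (y / e ^ 2) + u / e ^ 2 * (v / d ^ 2)) / (s / (d * e)) ^ 2 =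
    (x * y + u * v) / s ^ 2 := by
  rw [div_mul_div_comm, div_mul_div_comm, show e ^ 2 * d ^ 2 = d ^ 2 * e ^ 2 from by ring,
    ← add_div, div_pow, div_div_eq_mul_div, show (d * e) ^ 2 = d ^ 2 * e ^ 2 from by ring,
    div_mul_cancel₀ _ (mul_ne_zero (pow_ne_zero 2 hd) (pow_ne_zero 2 he))]

lemma comb2 (x y z g p pb r A Ab B Bb S T : ℂ) (hS : S ≠ 0) (hT : T ≠ 0) :
    (x / S ^ 2 * Bb + y / S ^ 2 * B) / T ^ 2 +
      (z / (S * T) ^ 2 * r + g / (S * T) * (2 * (p * Ab + pb * A) / S ^ 2)) =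
    ((x * Bb + y * B) * S ^ 2 + z * r * S ^ 2 + g * (2 * (p * Ab + pb * A)) * S * T) /
      (S ^ 4 * T ^ 2) := by
  have h1 : (S:ℂ) ^ 2 * T ^ 2 ≠ 0 := mul_ne_zero (pow_ne_zero 2 hS) (pow_ne_zero 2 hT)
  have h2 : ((S * T) : ℂ) ^ 2 ≠ 0 := pow_ne_zero 2 (mul_ne_zero hS hT)
  have h3 : (S * T) * S ^ 2 ≠ 0 := mul_ne_zero (mul_ne_zero hS hT) (pow_ne_zero 2 hS)
  have h4 : (S:ℂ) ^ 4 * T ^ 2 ≠ 0 := mul_ne_zero (pow_ne_zero 4 hS) (pow_ne_zero 2 hT)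
  rw [div_mul_eq_mul_div, div_mul_eq_mul_div, ← add_div, div_div,
    div_mul_eq_mul_div, div_mul_div_comm,
    div_add_div _ _ h2 h3, div_add_div _ _ h1 (mul_ne_zero h2 h3),
    div_eq_div_iff (mul_ne_zero h1 (mul_ne_zero h2 h3)) h4]
  ring

set_option maxHeartbeats 1000000 in
lemma lhs_eq (a ab b bb p pb r A Ab B Bb : ℂ)
    (h1 : 1 + a * ab ≠ 0) (h2 : 1 + b * bb ≠ 0)
    (hD : (1 - a * ab) * bb - 2 * ab ≠ 0) (hDb : (1 - ab * a) * b - 2 * a ≠ 0) :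
    (((ab - bb) ^ 2 * p - (1 + a * bb) ^ 2 * pb + (ab - bb) * (1 + a * bb) * (1 + a * ab) * r) / ((1 - a * ab) * bb - 2 * ab) ^ 2 * (((2 * (Ab * b + ab * B) - (Ab * a + ab * A)) * ((1 - ab * a) * b - 2 * a) - (2 * ab * b + 1 - ab * a) * (-(Ab * a + ab * A) * b + (1 - ab * a) * B - 2 * A)) / ((1 - ab * a) * b - 2 * a) ^ 2) + ((a - b) ^ 2 * pb - (1 + ab * b) ^ 2 * p + (a - b) * (1 + ab * b) * (1 + a * ab) * r) / ((1 - ab * a) * b - 2 * a) ^ 2 * (((2 * (A * bb + a * Bb) - (A * ab + a * Ab)) * ((1 - a * ab) * bb - 2 * ab) - (2 * a * bb + 1 - a * ab) * (-(A * ab + a * Ab) * bb + (1 - a * ab) * Bb - 2 * Ab)) / ((1 - a * ab) * bb - 2 * ab) ^ 2)) /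
      (1 + (2 * a * bb + 1 - a * ab) / ((1 - a * ab) * bb - 2 * ab) * ((2 * ab * b + 1 - ab * a) / ((1 - ab * a) * b - 2 * a))) ^ 2 = (((ab - bb) ^ 2 * p - (1 + a * bb) ^ 2 * pb + (ab - bb) * (1 + a * bb) * (1 + a * ab) * r) * ((2 * (Ab * b + ab * B) - (Ab * a + ab * A)) * ((1 - ab * a) * b - 2 * a) - (2 * ab * b + 1 - ab * a) * (-(Ab * a + ab * A) * b + (1 - ab * a) * B - 2 * A)) + ((a - b) ^ 2 * pb - (1 + ab * b) ^ 2 * p + (a - b) * (1 + ab * b) * (1 + a * ab) * r) * ((2 * (A * bb + a * Bb) - (A * ab + a * Ab)) * ((1 - a * ab) * bb - 2 * ab) - (2 * a * bb + 1 - a * ab) * (-(A * ab + a * Ab) * bb + (1 - a * ab) * Bb - 2 * Ab))) / ((1 + a * ab) ^ 4 * (1 + b * bb) ^ 2) := by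
  have hs : ((1 : ℂ) + a * ab) ^ 2 * (1 + b * bb) ≠ 0 := mul_ne_zero (pow_ne_zero 2 h1) h2
  have key : 1 + (2 * a * bb + 1 - a * ab) / ((1 - a * ab) * bb - 2 * ab) * ((2 * ab * b + 1 - ab * a) / ((1 - ab * a) * b - 2 * a)) =
      ((1 + a * ab) ^ 2 * (1 + b * bb)) / (((1 - a * ab) * bb - 2 * ab) * ((1 - ab * a) * b - 2 * a)) := by
    rw [div_mul_div_comm, one_add_div (mul_ne_zero hD hDb)]; congr 1; ring
  rw [key,
    comb ((ab - bb) ^ 2 * p - (1 + a * bb) ^ 2 * pb + (ab - bb) * (1 + a * bb) * (1 + a * ab) * r) ((2 * (Ab * b + ab * B) - (Ab * a + ab * A)) * ((1 - ab * a) * b - 2 * a) - (2 * ab * b + 1 - ab * a) * (-(Ab * a + ab * A) * b + (1 - ab * a) * B - 2 * A)) ((a - b) ^ 2 * pb - (1 + ab * b) ^ 2 * p + (a - b) * (1 + ab * b) * (1 + a * ab) * r) ((2 * (A * bb + a * Bb) - (A * ab + a * Ab)) * ((1 - a * ab) * bb - 2 * ab) - (2 * a * bb + 1 - a * ab) * (-(A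 * ab + a * Ab) * bb + (1 - a * ab) * Bb - 2 * Ab)) ((1 - a * ab) * bb - 2 * ab) ((1 - ab * a) * b - 2 * a) ((1 + a * ab) ^ 2 * (1 + b * bb)) hD hDb hs,
    show ((1 + a * ab) ^ 2 * (1 + b * bb)) ^ 2 = (1 + a * ab) ^ 4 * (1 + b * bb) ^ 2 from by ring]

set_option maxHeartbeats 1000000 in
lemma rhs_eq (a ab b bb p pb r A Ab B Bb : ℂ)
    (h1 : 1 + a * ab ≠ 0) (h2 : 1 + b * bb ≠ 0)
    (hD : (1 - a * ab) * bb - 2 * ab ≠ 0) (hDb : (1 - ab * a) * b - 2 * a ≠ 0) :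
    (((1 + ab * b) ^ 2 * p - (a - b) ^ 2 * pb + (a - b) * (1 + ab * b) * (1 + a * ab) * r) / (1 + a * ab) ^ 2 * Bb + ((1 + a * bb) ^ 2 * pb - (ab - bb) ^ 2 * p + (ab - bb) * (1 + a * bb) * (1 + a * ab) * r) / (1 + a * ab) ^ 2 * B) / (1 + b * bb) ^ 2 +
      ((((A - B) * (ab - bb) + (a - b) * (Ab - Bb) - (A * bb + a * Bb) * (1 + ab * b) - (1 + a * bb) * (Ab * b + ab * B)) * ((1 + a * ab) * (1 + b * bb)) - ((a - b) * (ab - bb) - (1 + a * bb) * (1 + ab * b)) * ((A * ab + a * Ab) * (1 + b * bb) + (1 + a * ab) * (B * bb + b * Bb))) / ((1 + a * ab) * (1 + b * bb)) ^ 2 * r +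
        ((a - b) * (ab - bb) - (1 + a * bb) * (1 + ab * b)) / ((1 + a * ab) * (1 + b * bb)) * (2 * (p * Ab + pb * A) / (1 + a * ab) ^ 2)) = ((((1 + ab * b) ^ 2 * p - (a - b) ^ 2 * pb + (a - b) * (1 + ab * b) * (1 + a * ab) * r) * Bb + ((1 + a * bb) ^ 2 * pb - (ab - bb) ^ 2 * p + (ab - bb) * (1 + a * bb) * (1 + a * ab) * r) * B) * (1 + a * ab) ^ 2 + (((A - B) * (ab - bb) + (a - b) * (Ab - Bb) - (A * bb + a * Bb) * (1 + ab * b) - (1 + a * bb) * (Ab * b + ab * B)) * ((1 + a * ab) * (1 + b * bb)) - ((a - b) * (ab - bb) - (1 + a * bb) * (1 + ab * b)) * ((A * ab + a * Ab) * (1 + b * bb) + (1 + a * ab) * (B * bb + b * Bb))) * r * (1 + a * ab) ^ 2 + ((a - b) * (ab - bb) - (1 + a * bb) * (1 + ab * b)) * (2 * (p * Ab + pb * A)) * (1 + a * ab) * (1 + b * bb)) / ((1 + a * ab) ^ 4 * (1 + b * bb) ^ 2) := by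
  exact comb2 ((1 + ab * b) ^ 2 * p - (a - b) ^ 2 * pb + (a - b) * (1 + ab * b) * (1 + a * ab) * r) ((1 + a * bb) ^ 2 * pb - (ab - bb) ^ 2 * p + (ab - bb) * (1 + a * bb) * (1 + a * ab) * r) (((A - B) * (ab - bb) + (a - b) * (Ab - Bb) - (A * bb + a * Bb) * (1 + ab * b) - (1 + a * bb) * (Ab * b + ab * B)) * ((1 + a * ab) * (1 + b * bb)) - ((a - b) * (ab - bb) - (1 + a * bb) * (1 + ab * b)) * ((A * ab + a * Ab) * (1 + b * bb) + (1 + a * ab) * (B * bb + b * Bb))) ((a - b) * (ab - bb) - (1 + a * bb) * (1 + ab * b)) p pb r A Ab B Bb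
    (1 + a * ab) (1 + b * bb) h1 h2

/-- the fundamental relation between the incident congruence `(ξ₁, η₁)`,
the reflecting surface `(ξ₀, η₀, r₀)` and the reflected congruence `(ξ₂, η₂)`:
`(η₂∂̄ξ̄₂ + η̄₂∂̄ξ₂)/(1+ξ₂ξ̄₂)² = (η₁∂̄ξ̄₁ + η̄₁∂̄ξ₁)/(1+ξ₁ξ̄₁)²
  + ∂̄( ((|ξ₀−ξ₁|² − |1+ξ₀ξ̄₁|²)/((1+ξ₀ξ̄₀)(1+ξ₁ξ̄₁)))·r₀ )`. -/
theorem reflected_congruence_relation (U : Set ℂ) (hU : IsOpen U)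
    (ξ₀ η₀ ξ₁ η₁ ξ₂ η₂ : ℂ → ℂ) (r₀ : ℂ → ℝ)
    (hξ₀ : DifferentiableOn ℝ ξ₀ U) (hη₀ : DifferentiableOn ℝ η₀ U)
    (hξ₁ : DifferentiableOn ℝ ξ₁ U) (hη₁d : DifferentiableOn ℝ η₁ U)
    (hr₀ : DifferentiableOn ℝ r₀ U)
    (hpot : ∀ ν ∈ U,
      wirtDbar (fun w => (r₀ w : ℂ)) ν =
        2 * (η₀ ν * wirtDbar (fun w => conj (ξ₀ w)) ν + conj (η₀ ν) * wirtDbar ξ₀ ν) /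
          (1 + ξ₀ ν * conj (ξ₀ ν)) ^ 2)
    (hden : ∀ ν ∈ U, (1 - ξ₀ ν * conj (ξ₀ ν)) * conj (ξ₁ ν) - 2 * conj (ξ₀ ν) ≠ 0)
    (hξ₂ : ∀ ν ∈ U, ξ₂ ν =
      (2 * ξ₀ ν * conj (ξ₁ ν) + 1 - ξ₀ ν * conj (ξ₀ ν)) /
        ((1 - ξ₀ ν * conj (ξ₀ ν)) * conj (ξ₁ ν) - 2 * conj (ξ₀ ν)))
    (hη₁ : ∀ ν ∈ U, η₁ ν =
      ((1 + conj (ξ₀ ν) * ξ₁ ν) ^ 2 * η₀ ν - (ξ₀ ν - ξ₁ ν) ^ 2 * conj (η₀ ν) +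
          (ξ₀ ν - ξ₁ ν) * (1 + conj (ξ₀ ν) * ξ₁ ν) * (1 + ξ₀ ν * conj (ξ₀ ν)) * (r₀ ν : ℂ)) /
        (1 + ξ₀ ν * conj (ξ₀ ν)) ^ 2)
    (hη₂ : ∀ ν ∈ U, η₂ ν =
      ((conj (ξ₀ ν) - conj (ξ₁ ν)) ^ 2 * η₀ ν - (1 + ξ₀ ν * conj (ξ₁ ν)) ^ 2 * conj (η₀ ν) +
          (conj (ξ₀ ν) - conj (ξ₁ ν)) * (1 + ξ₀ ν * conj (ξ₁ ν)) * (1 + ξ₀ ν * conj (ξ₀ ν)) *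
            (r₀ ν : ℂ)) /
        ((1 - ξ₀ ν * conj (ξ₀ ν)) * conj (ξ₁ ν) - 2 * conj (ξ₀ ν)) ^ 2) :
    ∀ ν ∈ U,
      (η₂ ν * wirtDbar (fun w => conj (ξ₂ w)) ν + conj (η₂ ν) * wirtDbar ξ₂ ν) /
          (1 + ξ₂ ν * conj (ξ₂ ν)) ^ 2 =
        (η₁ ν * wirtDbar (fun w => conj (ξ₁ w)) ν + conj (η₁ ν) * wirtDbar ξ₁ ν) /
            (1 + ξ₁ ν * conj (ξ₁ ν)) ^ 2 +
          wirtDbar (fun w =>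
            ((((Complex.normSq (ξ₀ w - ξ₁ w) - Complex.normSq (1 + ξ₀ w * conj (ξ₁ w))) /
                ((1 + Complex.normSq (ξ₀ w)) * (1 + Complex.normSq (ξ₁ w))) * r₀ w : ℝ)) : ℂ)) ν := by
  intro ν hν
  have hmem : U ∈ nhds ν := hU.mem_nhds hν
  have hd0 : DifferentiableAt ℝ ξ₀ ν := hξ₀.differentiableAt hmem
  have hd1 : DifferentiableAt ℝ ξ₁ ν := hξ₁.differentiableAt hmem
  have hd0c : DifferentiableAt ℝ (fun w => conj (ξ₀ w)) ν := diff_conj ξ₀ ν hd0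
  have hd1c : DifferentiableAt ℝ (fun w => conj (ξ₁ w)) ν := diff_conj ξ₁ ν hd1
  have hdr : DifferentiableAt ℝ (fun w => (r₀ w : ℂ)) ν :=
    diff_ofReal r₀ ν (hr₀.differentiableAt hmem)
  have hS : (1 : ℂ) + ξ₀ ν * conj (ξ₀ ν) ≠ 0 := one_add_mul_conj_ne (ξ₀ ν)
  have hT : (1 : ℂ) + ξ₁ ν * conj (ξ₁ ν) ≠ 0 := one_add_mul_conj_ne (ξ₁ ν)
  have hD := hden ν hν
  have hDb : (1 - conj (ξ₀ ν) * ξ₀ ν) * ξ₁ ν - 2 * ξ₀ ν ≠ 0 := by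
    rw [show (1 - conj (ξ₀ ν) * ξ₀ ν) * ξ₁ ν - 2 * ξ₀ ν =
        conj ((1 - ξ₀ ν * conj (ξ₀ ν)) * conj (ξ₁ ν) - 2 * conj (ξ₀ ν)) by
      simp only [map_sub, map_mul, map_one, map_ofNat, Complex.conj_conj]]
    rw [← Complex.star_def]
    exact star_ne_zero.mpr hD
  have hGd : ((1 : ℂ) + ξ₀ ν * conj (ξ₀ ν)) * (1 + ξ₁ ν * conj (ξ₁ ν)) ≠ 0 := mul_ne_zero hS hT
  have hnum2 : DifferentiableAt ℝ (fun w => (ξ₀ w - ξ₁ w) * (conj (ξ₀ w) - conj (ξ₁ w)) -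
      (1 + ξ₀ w * conj (ξ₁ w)) * (1 + conj (ξ₀ w) * ξ₁ w)) ν := by fun_prop
  have hden2 : DifferentiableAt ℝ (fun w =>
      (1 + ξ₀ w * conj (ξ₀ w)) * (1 + ξ₁ w * conj (ξ₁ w))) ν := by fun_prop
  have hquot : DifferentiableAt ℝ (fun w => ((ξ₀ w - ξ₁ w) * (conj (ξ₀ w) - conj (ξ₁ w)) -
      (1 + ξ₀ w * conj (ξ₁ w)) * (1 + conj (ξ₀ w) * ξ₁ w)) /
      ((1 + ξ₀ w * conj (ξ₀ w)) * (1 + ξ₁ w * conj (ξ₁ w)))) ν := by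
    have h := hnum2.mul (hden2.inv hGd)
    simp only [div_eq_mul_inv]; exact h
  -- ∂̄ξ₂
  have hev : ξ₂ =ᶠ[nhds ν] fun w => ((2 * ξ₀ w * conj (ξ₁ w) + 1 - ξ₀ w * conj (ξ₀ w))) / (((1 - ξ₀ w * conj (ξ₀ w)) * conj (ξ₁ w) - 2 * conj (ξ₀ w))) := by
    filter_upwards [hmem] with w hw
    exact hξ₂ w hw
  have hx2 : wirtDbar ξ₂ ν = ((2 * ((wirtDbar ξ₀ ν) * (conj (ξ₁ ν)) + (ξ₀ ν) * (wirtDbar (fun w => conj (ξ₁ w)) ν)) - ((wirtDbar ξ₀ ν) * (conj (ξ₀ ν)) + (ξ₀ ν) * (wirtDbar (fun w => conj (ξ₀ w)) ν))) * ((1 - (ξ₀ ν) * (conj (ξ₀ ν))) * (conj (ξ₁ ν)) - 2 * (conj (ξ₀ ν))) - (2 * (ξ₀ ν) * (conj (ξ₁ ν)) + 1 - (ξ₀ ν) * (conj (ξ₀ ν))) * (-((wirtDbar ξ₀ ν) * (conj (ξ₀ ν)) + (ξ₀ ν) * (wirtDbar (fun w => conj (ξ₀ w)) ν)) * (conj (ξ₁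 ν)) + (1 - (ξ₀ ν) * (conj (ξ₀ ν))) * (wirtDbar (fun w => conj (ξ₁ w)) ν) - 2 * (wirtDbar (fun w => conj (ξ₀ w)) ν))) / ((1 - (ξ₀ ν) * (conj (ξ₀ ν))) * (conj (ξ₁ ν)) - 2 * (conj (ξ₀ ν))) ^ 2 := by
    rw [wirtDbar_congr hev]
    simp (disch := first | assumption | fun_prop) only
      [wirtDbar_div, wirtDbar_sub, wirtDbar_add, wirtDbar_mul, wirtDbar_const]
    ring
  -- ∂̄(conj ξ₂)
  have hev2 : (fun w => conj (ξ₂ w)) =ᶠ[nhds ν] fun w => ((2 * conj (ξ₀ w) * ξ₁ w + 1 - conj (ξ₀ w) * ξ₀ w)) / (((1 - conj (ξ₀ w) * ξ₀ w) * ξ₁ w - 2 * ξ₀ w)) := by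
    filter_upwards [hmem] with w hw
    rw [hξ₂ w hw, map_div₀]
    simp only [map_sub, map_add, map_mul, map_one, map_ofNat, Complex.conj_conj]
  have hx2b : wirtDbar (fun w => conj (ξ₂ w)) ν = ((2 * ((wirtDbar (fun w => conj (ξ₀ w)) ν) * (ξ₁ ν) + (conj (ξ₀ ν)) * (wirtDbar ξ₁ ν)) - ((wirtDbar (fun w => conj (ξ₀ w)) ν) * (ξ₀ ν) + (conj (ξ₀ ν)) * (wirtDbar ξ₀ ν))) * ((1 - (conj (ξ₀ ν)) * (ξ₀ ν)) * (ξ₁ ν) - 2 * (ξ₀ ν)) - (2 * (conj (ξ₀ ν)) * (ξ₁ ν) + 1 - (conj (ξ₀ ν)) * (ξ₀ ν)) * (-((wirtDbar (fun w => conj (ξ₀ w)) ν) * (ξ₀ ν) + (conj (ξ₀ ν)) * (wirtDbar ξ₀ ν)) * (ξ₁ ν) + (1 - (conj (ξ₀ ν)) * (ξ₀ ν)) * (wirtDbar ξ₁ ν) - 2 * (wirtDbar ξ₀ ν))) / ((1 - (conj (ξ₀ ν)) * (ξ₀ ν)) * (ξ₁ ν) - 2 * (ξ₀ ν)) ^ 2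 := by
    rw [wirtDbar_congr hev2]
    simp (disch := first | assumption | fun_prop) only
      [wirtDbar_div, wirtDbar_sub, wirtDbar_add, wirtDbar_mul, wirtDbar_const]
    ring
  -- potential term
  have hfunE : (fun w =>
            ((((Complex.normSq (ξ₀ w - ξ₁ w) - Complex.normSq (1 + ξ₀ w * conj (ξ₁ w))) /
                ((1 + Complex.normSq (ξ₀ w)) * (1 + Complex.normSq (ξ₁ w))) * r₀ w : ℝ)) : ℂ)) = fun w => ((ξ₀ w - ξ₁ w) * (conj (ξ₀ w) - conj (ξ₁ w)) - (1 + ξ₀ w * conj (ξ₁ w)) * (1 + conj (ξ₀ w) * ξ₁ w)) /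
      ((1 + ξ₀ w * conj (ξ₀ w)) * (1 + ξ₁ w * conj (ξ₁ w))) * (r₀ w : ℂ) := by
    funext w
    simp only [Complex.ofReal_mul, Complex.ofReal_div, Complex.ofReal_sub, Complex.ofReal_add,
      Complex.ofReal_one, ← Complex.mul_conj, map_sub, map_add, map_mul, map_one,
      Complex.conj_conj]
    all_goals ring
  have hg : wirtDbar (fun w => ((ξ₀ w - ξ₁ w) * (conj (ξ₀ w) - conj (ξ₁ w)) - (1 + ξ₀ w * conj (ξ₁ w)) * (1 + conj (ξ₀ w) * ξ₁ w)) /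
      ((1 + ξ₀ w * conj (ξ₀ w)) * (1 + ξ₁ w * conj (ξ₁ w))) * (r₀ w : ℂ)) ν = ((((wirtDbar ξ₀ ν) - (wirtDbar ξ₁ ν)) * ((conj (ξ₀ ν)) - (conj (ξ₁ ν))) + ((ξ₀ ν) - (ξ₁ ν)) * ((wirtDbar (fun w => conj (ξ₀ w)) ν) - (wirtDbar (fun w => conj (ξ₁ w)) ν)) - ((wirtDbar ξ₀ ν) * (conj (ξ₁ ν)) + (ξ₀ ν) * (wirtDbar (fun w => conj (ξ₁ w)) ν)) * (1 + (conj (ξ₀ ν)) * (ξ₁ ν)) - (1 + (ξ₀ ν) * (conj (ξ₁ ν))) * ((wirtDbar (fun w => conj (ξ₀ w)) ν) * (ξ₁ ν) + (conj (ξ₀ ν)) * (wirtDbar ξ₁ ν))) * ((1 + (ξ₀ ν) * (conj (ξ₀ ν))) * (1 + (ξ₁ ν) * (conj (ξ₁ ν)))) - (((ξ₀ ν) - (ξ₁ ν)) * ((conj (ξ₀ ν)) - (conj (ξ₁ ν))) - (1 + (ξ₀ ν) * (conj (ξ₁ ν))) * (1 + (conj (ξ₀ ν)) * (ξ₁ ν)))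 * (((wirtDbar ξ₀ ν) * (conj (ξ₀ ν)) + (ξ₀ ν) * (wirtDbar (fun w => conj (ξ₀ w)) ν)) * (1 + (ξ₁ ν) * (conj (ξ₁ ν))) + (1 + (ξ₀ ν) * (conj (ξ₀ ν))) * ((wirtDbar ξ₁ ν) * (conj (ξ₁ ν)) + (ξ₁ ν) * (wirtDbar (fun w => conj (ξ₁ w)) ν)))) / ((1 + (ξ₀ ν) * (conj (ξ₀ ν))) * (1 + (ξ₁ ν) * (conj (ξ₁ ν)))) ^ 2 * ((r₀ ν : ℂ)) +
        (((ξ₀ ν) - (ξ₁ ν)) * ((conj (ξ₀ ν)) - (conj (ξ₁ ν))) - (1 + (ξ₀ ν) * (conj (ξ₁ ν))) * (1 + (conj (ξ₀ ν)) * (ξ₁ ν))) / ((1 + (ξ₀ ν) * (conj (ξ₀ ν))) * (1 + (ξ₁ ν) * (conj (ξ₁ ν)))) * (wirtDbar (fun w => (r₀ w : ℂ)) ν) := by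
    simp (disch := first | assumption | fun_prop) only
      [wirtDbar_div, wirtDbar_sub, wirtDbar_add, wirtDbar_mul, wirtDbar_const]
    ring
  -- conj computations
  have hcx2 : conj (((2 * (ξ₀ ν) * (conj (ξ₁ ν)) + 1 - (ξ₀ ν) * (conj (ξ₀ ν)))) / (((1 - (ξ₀ ν) * (conj (ξ₀ ν))) * (conj (ξ₁ ν)) - 2 * (conj (ξ₀ ν))))) = ((2 * (conj (ξ₀ ν)) * (ξ₁ ν) + 1 - (conj (ξ₀ ν)) * (ξ₀ ν))) / (((1 - (conj (ξ₀ ν)) * (ξ₀ ν)) * (ξ₁ ν) - 2 * (ξ₀ ν))) := by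
    rw [map_div₀]
    simp only [map_sub, map_add, map_mul, map_one, map_ofNat, Complex.conj_conj]
  have hce2 : conj ((((conj (ξ₀ ν)) - (conj (ξ₁ ν))) ^ 2 * (η₀ ν) - (1 + (ξ₀ ν) * (conj (ξ₁ ν))) ^ 2 * (conj (η₀ ν)) + ((conj (ξ₀ ν)) - (conj (ξ₁ ν))) * (1 + (ξ₀ ν) * (conj (ξ₁ ν))) * (1 + (ξ₀ ν) * (conj (ξ₀ ν))) * ((r₀ ν : ℂ))) / ((1 - (ξ₀ ν) * (conj (ξ₀ ν))) * (conj (ξ₁ ν)) - 2 * (conj (ξ₀ ν))) ^ 2) = (((ξ₀ ν) - (ξ₁ ν)) ^ 2 * (conj (η₀ ν)) - (1 + (conj (ξ₀ ν)) * (ξ₁ ν)) ^ 2 * (η₀ ν) + ((ξ₀ ν) - (ξ₁ ν)) * (1 + (conj (ξ₀ ν)) * (ξ₁ ν)) * (1 + (ξ₀ ν) * (conj (ξ₀ ν))) * ((r₀ ν : ℂ))) / ((1 - (conj (ξ₀ ν)) * (ξ₀ ν)) * (ξ₁ ν) - 2 * (ξ₀ ν)) ^ 2 := by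
    rw [map_div₀, map_pow]
    simp only [map_sub, map_add, map_mul, map_one, map_pow, map_ofNat, Complex.conj_conj,
      Complex.conj_ofReal]
    ring
  have hce1 : conj (((1 + (conj (ξ₀ ν)) * (ξ₁ ν)) ^ 2 * (η₀ ν) - ((ξ₀ ν) - (ξ₁ ν)) ^ 2 * (conj (η₀ ν)) + ((ξ₀ ν) - (ξ₁ ν)) * (1 + (conj (ξ₀ ν)) * (ξ₁ ν)) * (1 + (ξ₀ ν) * (conj (ξ₀ ν))) * ((r₀ ν : ℂ))) / (1 + (ξ₀ ν) * (conj (ξ₀ ν))) ^ 2) =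
      ((1 + (ξ₀ ν) * (conj (ξ₁ ν))) ^ 2 * (conj (η₀ ν)) - ((conj (ξ₀ ν)) - (conj (ξ₁ ν))) ^ 2 * (η₀ ν) + ((conj (ξ₀ ν)) - (conj (ξ₁ ν))) * (1 + (ξ₀ ν) * (conj (ξ₁ ν))) * (1 + (ξ₀ ν) * (conj (ξ₀ ν))) * ((r₀ ν : ℂ))) / (1 + (ξ₀ ν) * (conj (ξ₀ ν))) ^ 2 := by
    rw [map_div₀, map_pow]
    simp only [map_sub, map_add, map_mul, map_one, map_pow, map_ofNat, Complex.conj_conj,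
      Complex.conj_ofReal]
    ring
  rw [hx2, hx2b, hfunE, hg, hξ₂ ν hν, hcx2, hη₂ ν hν, hce2, hη₁ ν hν, hce1, hpot ν hν]
  rw [lhs_eq (ξ₀ ν) (conj (ξ₀ ν)) (ξ₁ ν) (conj (ξ₁ ν)) (η₀ ν) (conj (η₀ ν)) ((r₀ ν : ℂ))
      (wirtDbar ξ₀ ν) (wirtDbar (fun w => conj (ξ₀ w)) ν) (wirtDbar ξ₁ ν)
      (wirtDbar (fun w => conj (ξ₁ w)) ν) hS hT hD hDb]
  rw [rhs_eq (ξ₀ ν) (conj (ξ₀ ν)) (ξ₁ ν) (conj (ξ₁ ν)) (η₀ ν) (conj (η₀ ν)) ((r₀ ν : ℂ))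
      (wirtDbar ξ₀ ν) (wirtDbar (fun w => conj (ξ₀ w)) ν) (wirtDbar ξ₁ ν)
      (wirtDbar (fun w => conj (ξ₁ w)) ν) hS hT hD hDb]
  rw [poly_key (ξ₀ ν) (conj (ξ₀ ν)) (ξ₁ ν) (conj (ξ₁ ν)) (η₀ ν) (conj (η₀ ν)) ((r₀ ν : ℂ))
      (wirtDbar ξ₀ ν) (wirtDbar (fun w => conj (ξ₀ w)) ν) (wirtDbar ξ₁ ν)
      (wirtDbar (fun w => conj (ξ₁ w)) ν)]
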